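/- Suppose condition (I⁰_ρ) holds for some ρ > 0: there exists a finite positive Borel measure dA^ρ on [0,1], with α^ρ[u] := ∫₀¹ u(t) dA^ρ(t) and 𝒦^ρ(s) := ∫₀¹ k(t,s) dA^ρ(t), such that α^ρ[γ] < 1, H[u] ≥ α^ρ[u] for every u ∈ K with min_{t∈[0,1]} u(t) = ρ, and f_{ρ,ρ/c} · inf_{t∈[0,1]} { γ(t)/(1−α^ρ[γ]) · ∫₀¹ 𝒦^ρ(s) g(s) ds + ∫₀¹ k(t,s) g(s) ds } > 1, where f_{ρ,ρ/c} := ess inf { f(t,u)/ρ : 0 ≤ t ≤ 1, ρ ≤ u ≤ ρ/c }. Then for every u ∈ K with min_{t∈[0,1]} u(t) = ρ and every real λ ≥ 0 one has u ≠ Tu + λ·𝟙, where 𝟙 denotes the constant function equal to 1 on [0,1]. -/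

import Mathlib

open MeasureTheory Set

/-- Supremum norm of `u` on `[0,1]`. -/
noncomputable def nrm (u : ℝ → ℝ) : ℝ := sSup ((fun t => |u t|) '' Icc (0:ℝ) 1)

/-- Minimum (infimum) of `u` on `[a,b]`. -/
noncomputable def minOnIcc (u : ℝ → ℝ) (a b : ℝ) : ℝ := sInf (u '' Icc a b)

/-- The perturbed Hammerstein operator `Tu(t) = γ(t)H[u] + ∫₀¹ k(t,s)g(s)f(s,u(s)) ds`. -/
noncomputable def Tham (k : ℝ → ℝ → ℝ) (g : ℝ → ℝ) (f : ℝ → ℝ → ℝ) (γ : ℝ → ℝ)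
    (H : (ℝ → ℝ) → ℝ) (u : ℝ → ℝ) (t : ℝ) : ℝ :=
  γ t * H u + ∫ s in (0:ℝ)..1, k t s * g s * f s (u s)

/-- Condition (I⁰_ρ) for strongly positive kernels. -/
def CondI0 (k : ℝ → ℝ → ℝ) (g : ℝ → ℝ) (f : ℝ → ℝ → ℝ) (γ : ℝ → ℝ)
    (H : (ℝ → ℝ) → ℝ) (K : Set (ℝ → ℝ)) (c ρ : ℝ) : Prop :=
  ∃ μA : Measure ℝ, IsFiniteMeasure μA ∧ μA ((Icc (0:ℝ) 1)ᶜ) = 0 ∧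
    (∫ t, γ t ∂μA) < 1 ∧
    (∀ u ∈ K, minOnIcc u 0 1 = ρ → (∫ t, u t ∂μA) ≤ H u) ∧
    ∃ fb : ℝ,
      (∀ᵐ t ∂(volume.restrict (Icc (0:ℝ) 1)), ∀ u : ℝ, ρ ≤ u → u ≤ ρ / c → fb * ρ ≤ f t u) ∧
      1 < fb * sInf ((fun t => γ t / (1 - ∫ t', γ t' ∂μA) *
          (∫ s in (0:ℝ)..1, (∫ t', k t' s ∂μA) * g s) +
          ∫ s in (0:ℝ)..1, k t s * g s) '' Icc (0:ℝ) 1)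

private lemma arith_aux (ρ fb M d q1 q2 Jv Iv gH ut lam : ℝ) (hρ : 0 < ρ)
    (hfb : 0 < fb) (hd : 0 ≤ d) (hME : M ≤ d * q1 + q2)
    (hq1 : fb * ρ * q1 ≤ Jv) (hq2 : fb * ρ * q2 ≤ Iv)
    (h8 : d * Jv ≤ gH) (hut : ut = gH + Iv + lam) (hlam : 0 ≤ lam) :
    ρ * (fb * M) ≤ ut := by
  nlinarith [mul_le_mul_of_nonneg_left hME (mul_nonneg hρ.le hfb.le),
    mul_le_mul_of_nonneg_left hq1 hd]

private lemma contra_aux (ρ fb M : ℝ) (hρ : 0 < ρ) (h1 : 1 < fb * M)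
    (h2 : ρ * (fb * M) ≤ ρ) : False := by nlinarith

private lemma fbpos_aux (fb M : ℝ) (h1 : 1 < fb * M) (h2 : 0 ≤ M) : 0 < fb := by
  nlinarith

theorem stmt1
    (k : ℝ → ℝ → ℝ) (g : ℝ → ℝ) (f : ℝ → ℝ → ℝ) (Φ γ : ℝ → ℝ) (c₁ c₂ c : ℝ)
    (H : (ℝ → ℝ) → ℝ) (K : Set (ℝ → ℝ))
    (hk_meas : Measurable (Function.uncurry k))
    (hk_pos : ∀ t ∈ Icc (0:ℝ) 1, ∀ s ∈ Icc (0:ℝ) 1, 0 < k t s)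
    (hk_cont : ∀ τ ∈ Icc (0:ℝ) 1, ∀ᵐ s ∂(volume.restrict (Icc (0:ℝ) 1)),
      Filter.Tendsto (fun t => |k t s - k τ s|) (nhdsWithin τ (Icc (0:ℝ) 1)) (nhds 0))
    (hΦ_meas : Measurable Φ)
    (hΦ_bdd : ∃ C, ∀ᵐ s ∂(volume.restrict (Icc (0:ℝ) 1)), |Φ s| ≤ C)
    (hc₁ : c₁ ∈ Ioc (0:ℝ) 1)
    (hkΦ : ∀ t ∈ Icc (0:ℝ) 1, ∀ᵐ s ∂(volume.restrict (Icc (0:ℝ) 1)),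
      c₁ * Φ s ≤ k t s ∧ k t s ≤ Φ s)
    (hg_meas : Measurable g)
    (hg_nonneg : ∀ᵐ s ∂(volume.restrict (Icc (0:ℝ) 1)), 0 ≤ g s)
    (hgΦ_int : IntegrableOn (fun s => g s * Φ s) (Icc (0:ℝ) 1))
    (hΦg_pos : 0 < ∫ s in (0:ℝ)..1, Φ s * g s)
    (hf_meas : ∀ u : ℝ, Measurable (fun t => f t u))
    (hf_cont : ∀ᵐ t ∂(volume.restrict (Icc (0:ℝ) 1)), ContinuousOn (f t) (Ici 0))
    (hf_nonneg : ∀ t u : ℝ, 0 ≤ u → 0 ≤ f t u)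
    (hf_bdd : ∀ r > 0, ∃ C, ∀ᵐ t ∂(volume.restrict (Icc (0:ℝ) 1)), ∀ u ∈ Icc (0:ℝ) r, f t u ≤ C)
    (hγ_cont : ContinuousOn γ (Icc (0:ℝ) 1))
    (hc₂ : c₂ ∈ Ioc (0:ℝ) 1)
    (hγ_low : ∀ t ∈ Icc (0:ℝ) 1, c₂ * nrm γ ≤ γ t)
    (hc : c = min c₁ c₂)
    (hK : K = {u : ℝ → ℝ | ContinuousOn u (Icc (0:ℝ) 1) ∧ c * nrm u ≤ minOnIcc u 0 1})
    (hH_nonneg : ∀ u ∈ K, 0 ≤ H u)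
    (hH_cont : ∀ u ∈ K, ∀ ε > 0, ∃ δ > 0, ∀ v ∈ K,
      nrm (fun t => u t - v t) < δ → |H u - H v| < ε)
    (hH_bdd : ∀ M : ℝ, ∃ M', ∀ u ∈ K, nrm u ≤ M → H u ≤ M')
    (ρ : ℝ) (hρ : 0 < ρ) (hI0 : CondI0 k g f γ H K c ρ) :
    ∀ u ∈ K, minOnIcc u 0 1 = ρ → ∀ lam : ℝ, 0 ≤ lam →
      ¬ (∀ t ∈ Icc (0:ℝ) 1, u t = Tham k g f γ H u t + lam) := by
  classical
  obtain ⟨μA, hμfin, hμc, hαγ, hHge, fb, hfb, hfbM⟩ := hI0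
  haveI : IsFiniteMeasure μA := hμfin
  intro u hu hmin lam hlam heq
  have hc1 : (0:ℝ) < c₁ := hc₁.1
  have hc2 : (0:ℝ) < c₂ := hc₂.1
  have hcpos : 0 < c := by rw [hc]; exact lt_min hc1 hc2
  have huK := hu
  rw [hK] at huK
  obtain ⟨hu_cont, hu_min⟩ := huK
  rw [hmin] at hu_min
  have hne : (Icc (0:ℝ) 1).Nonempty := ⟨0, by norm_num⟩
  have h01 : (0:ℝ) ∈ Icc (0:ℝ) 1 := by norm_num
  -- bounds on u
  have hbb : BddBelow (u '' Icc (0:ℝ) 1) :=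
    (isCompact_Icc.image_of_continuousOn hu_cont).bddBelow
  have hulb : ∀ s ∈ Icc (0:ℝ) 1, ρ ≤ u s := by
    intro s hs; rw [← hmin]; exact csInf_le hbb (mem_image_of_mem u hs)
  have hba : BddAbove ((fun t => |u t|) '' Icc (0:ℝ) 1) :=
    (isCompact_Icc.image_of_continuousOn hu_cont.abs).bddAbove
  have hnrm : ∀ s ∈ Icc (0:ℝ) 1, u s ≤ ρ / c := by
    intro s hs
    have h1 : |u s| ≤ nrm u := le_csSup hba (mem_image_of_mem _ hs)
    have h2 : u s ≤ nrm u := le_trans (le_abs_self _) h1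
    rw [le_div_iff₀ hcpos]
    nlinarith [hu_min]
  -- gamma facts
  have hγba : BddAbove ((fun t => |γ t|) '' Icc (0:ℝ) 1) :=
    (isCompact_Icc.image_of_continuousOn hγ_cont.abs).bddAbove
  have hnγ : 0 ≤ nrm γ :=
    le_trans (abs_nonneg (γ 0)) (le_csSup hγba (mem_image_of_mem _ h01))
  have hγ0 : ∀ t ∈ Icc (0:ℝ) 1, 0 ≤ γ t := fun t ht =>
    le_trans (mul_nonneg hc2.le hnγ) (hγ_low t ht)
  have h1A : 0 < 1 - ∫ t', γ t' ∂μA := by linarith [hαγ]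
  -- μA lives on Icc
  have hμIcc : ∀ᵐ t ∂μA, t ∈ Icc (0:ℝ) 1 := by
    rw [MeasureTheory.ae_iff]
    simpa [Set.compl_def] using hμc
  have hrest : μA.restrict (Icc (0:ℝ) 1) = μA :=
    Measure.restrict_eq_self_of_ae_mem hμIcc
  -- measurability of s ↦ f s (u s)
  obtain ⟨Cf, hCf⟩ := hf_bdd (ρ / c) (by positivity)
  set E : Set ℝ :=
    toMeasurable (volume.restrict (Icc (0:ℝ) 1)) {t | ¬ ContinuousOn (f t) (Ici 0)} with hE
  have hEmeas : MeasurableSet E := measurableSet_toMeasurable _ _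
  have hEnull : volume.restrict (Icc (0:ℝ) 1) E = 0 := by
    rw [hE, measure_toMeasurable]
    exact MeasureTheory.ae_iff.mp hf_cont
  set w : ℝ → ℝ → ℝ := fun v t => if t ∈ E then 0 else f t (max v 0) with hw
  have hw_cont : ∀ t, Continuous fun v => w v t := by
    intro t
    by_cases htE : t ∈ E
    · simp only [hw, htE, if_true]; exact continuous_const
    · simp only [hw, htE, if_false]
      have hgood : ContinuousOn (f t) (Ici 0) := by
        by_contra hbad
        exact htE (subset_toMeasurable _ _ hbad)
      exact hgood.comp_continuous (continuous_id.max continuous_const)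
        (fun v => (le_max_right v 0 : (0:ℝ) ≤ max v 0))
  have hw_meas : ∀ v, Measurable fun t => w v t := by
    intro v
    simp only [hw]
    exact Measurable.ite hEmeas measurable_const (hf_meas (max v 0))
  have hW : Measurable (Function.uncurry w) :=
    measurable_uncurry_of_continuous_of_measurable hw_cont hw_meas
  have hu_aem : AEMeasurable u (volume.restrict (Icc (0:ℝ) 1)) :=
    hu_cont.aemeasurable measurableSet_Icc
  have hfu_aem : AEMeasurable (fun s => f s (u s)) (volume.restrict (Icc (0:ℝ) 1)) := by
    have h1 : AEMeasurable (fun s => w (u s) s) (volume.restrict (Icc (0:ℝ) 1)) :=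
      hW.comp_aemeasurable (hu_aem.prodMk aemeasurable_id)
    refine h1.congr ?_
    have hEc : ∀ᵐ s ∂(volume.restrict (Icc (0:ℝ) 1)), s ∉ E :=
      measure_eq_zero_iff_ae_notMem.mp hEnull
    filter_upwards [hEc, ae_restrict_mem measurableSet_Icc] with s hsE hs
    simp only [hw]
    rw [if_neg hsE, max_eq_left (le_trans hρ.le (hulb s hs))]
  -- setup ν and G
  set ν : Measure ℝ := volume.restrict (Ioc (0:ℝ) 1) with hν
  have haeν : ∀ (p : ℝ → Prop), (∀ᵐ s ∂(volume.restrict (Icc (0:ℝ) 1)), p s) →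
      ∀ᵐ s ∂ν, p s := fun p h =>
    ae_restrict_of_ae_restrict_of_subset Ioc_subset_Icc_self h
  have hsIcc : ∀ᵐ s ∂ν, s ∈ Icc (0:ℝ) 1 := haeν _ (ae_restrict_mem measurableSet_Icc)
  have hgν : ∀ᵐ s ∂ν, 0 ≤ g s := haeν _ hg_nonneg
  set G : ℝ → ℝ := fun s => g s * f s (u s) with hG
  have hG_aem : AEMeasurable G ν :=
    (hg_meas.aemeasurable.mul hfu_aem).mono_measure
      (Measure.restrict_mono Ioc_subset_Icc_self le_rfl)
  have hGb : ∀ᵐ s ∂ν, 0 ≤ G s ∧ G s ≤ g s * Cf := by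
    filter_upwards [haeν _ hCf, hgν, hsIcc] with s h1 h2 h3
    have hus : u s ∈ Icc (0:ℝ) (ρ/c) := ⟨le_trans hρ.le (hulb s h3), hnrm s h3⟩
    refine ⟨mul_nonneg h2 (hf_nonneg s (u s) hus.1), ?_⟩
    exact mul_le_mul_of_nonneg_left (h1 (u s) hus) h2
  have hdom : Integrable (fun s => g s * Φ s * Cf) ν :=
    (hgΦ_int.mono_set Ioc_subset_Icc_self).mul_const Cf
  have hbound : ∀ t ∈ Icc (0:ℝ) 1, ∀ᵐ s ∂ν, ‖k t s * G s‖ ≤ g s * Φ s * Cf := by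
    intro t ht
    filter_upwards [haeν _ (hkΦ t ht), hGb, hsIcc] with s h1 h2 hs
    have hk0 : 0 ≤ k t s := (hk_pos t ht s hs).le
    rw [Real.norm_eq_abs, abs_of_nonneg (mul_nonneg hk0 h2.1)]
    calc k t s * G s ≤ Φ s * (g s * Cf) :=
          mul_le_mul h1.2 h2.2 h2.1 (le_trans hk0 h1.2)
      _ = g s * Φ s * Cf := by ring
  have hkt_int : ∀ t ∈ Icc (0:ℝ) 1, Integrable (fun s => k t s * G s) ν := by
    intro t ht
    have hsm : AEStronglyMeasurable (fun s => k t s * G s) ν :=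
      (((hk_meas.comp (measurable_const.prodMk measurable_id)).aemeasurable).mul
        hG_aem).aestronglyMeasurable
    exact hdom.mono' hsm (hbound t ht)
  -- product integrability
  have hFsm : AEStronglyMeasurable (fun p : ℝ × ℝ => k p.1 p.2 * G p.2) (μA.prod ν) := by
    have h1 : AEMeasurable (fun p : ℝ × ℝ => G p.2) (μA.prod ν) :=
      hG_aem.comp_quasiMeasurePreserving Measure.quasiMeasurePreserving_snd
    exact ((hk_meas.aemeasurable).mul h1).aestronglyMeasurable
  have hFint : Integrable (fun p : ℝ × ℝ => k p.1 p.2 * G p.2) (μA.prod ν) := by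
    rw [integrable_prod_iff hFsm]
    constructor
    · filter_upwards [hμIcc] with t ht
      exact hkt_int t ht
    · refine (integrable_const (∫ s, g s * Φ s * Cf ∂ν)).mono'
        hFsm.norm.integral_prod_right' ?_
      filter_upwards [hμIcc] with t ht
      have h1 : ∫ s, ‖k t s * G s‖ ∂ν ≤ ∫ s, g s * Φ s * Cf ∂ν :=
        integral_mono_of_nonneg (Filter.Eventually.of_forall fun s => norm_nonneg _)
          hdom (hbound t ht)
      rw [Real.norm_eq_abs, abs_of_nonneg (integral_nonneg fun s => norm_nonneg _)]
      exact h1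
  -- Fubini
  have hswapJ : (∫ t, (∫ s, k t s * G s ∂ν) ∂μA)
      = ∫ s, (∫ t', k t' s ∂μA) * G s ∂ν := by
    rw [integral_integral_swap (f := fun t s => k t s * G s) hFint]
    exact integral_congr_ae (Filter.Eventually.of_forall fun s =>
      integral_mul_const (G s) fun t => k t s)
  have hJint : Integrable (fun s => (∫ t', k t' s ∂μA) * G s) ν := by
    have h5 := hFint.integral_prod_right
    have h6 : (fun s => ∫ t, k t s * G s ∂μA)
        = fun s => (∫ t', k t' s ∂μA) * G s :=
      funext fun s => integral_mul_const (G s) fun t => k t s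
    rwa [h6] at h5
  -- the pointwise equation
  have heq' : ∀ t ∈ Icc (0:ℝ) 1,
      u t = γ t * H u + (∫ s, k t s * G s ∂ν) + lam := by
    intro t ht
    have h2 : (∫ s in (0:ℝ)..1, k t s * g s * f s (u s)) = ∫ s, k t s * G s ∂ν := by
      rw [intervalIntegral.integral_of_le zero_le_one, hν]
      exact integral_congr_ae (Filter.Eventually.of_forall fun s => by
        simp only [hG]; ring)
    rw [heq t ht]
    simp only [Tham]
    rw [h2]
  -- integrate the equation against μA
  have hγ_int : Integrable γ μA := by
    obtain ⟨Cγ, hCγ⟩ := isCompact_Icc.exists_bound_of_continuousOn hγ_cont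
    have hsm : AEStronglyMeasurable γ μA := by
      rw [← hrest]; exact hγ_cont.aestronglyMeasurable measurableSet_Icc
    refine (integrable_const Cγ).mono' hsm ?_
    filter_upwards [hμIcc] with t ht using hCγ t ht
  have hI_int : Integrable (fun t => ∫ s, k t s * G s ∂ν) μA :=
    hFint.integral_prod_left
  have hαu : (∫ t, u t ∂μA) = (∫ t', γ t' ∂μA) * H u
      + (∫ s, (∫ t', k t' s ∂μA) * G s ∂ν) + lam * (μA Set.univ).toReal := by
    have h1 : (∫ t, u t ∂μA)
        = ∫ t, (γ t * H u + (∫ s, k t s * G s ∂ν) + lam) ∂μA :=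
      integral_congr_ae (by filter_upwards [hμIcc] with t ht using heq' t ht)
    have ib : Integrable (fun t => γ t * H u) μA := hγ_int.mul_const (H u)
    have ia : Integrable (fun t => γ t * H u + ∫ s, k t s * G s ∂ν) μA :=
      ib.add hI_int
    rw [h1, integral_add ia (integrable_const lam), integral_add ib hI_int,
        integral_mul_const, integral_const, hswapJ, smul_eq_mul, measureReal_def]
    ring
  have hHuge2 : (∫ s, (∫ t', k t' s ∂μA) * G s ∂ν)
      ≤ (1 - ∫ t', γ t' ∂μA) * H u := by
    have h7 := hHge u hu hmin
    have h8 : 0 ≤ lam * (μA Set.univ).toReal :=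
      mul_nonneg hlam ENNReal.toReal_nonneg
    linarith [hαu, h7, h8]
  -- nonnegativity of the kernel integrals
  have h𝒦0 : ∀ s ∈ Icc (0:ℝ) 1, 0 ≤ ∫ t', k t' s ∂μA := fun s hs =>
    integral_nonneg_of_ae (by filter_upwards [hμIcc] with t ht using (hk_pos t ht s hs).le)
  have hQ1 : (∫ s in (0:ℝ)..1, (∫ t', k t' s ∂μA) * g s)
      = ∫ s, (∫ t', k t' s ∂μA) * g s ∂ν := by
    rw [intervalIntegral.integral_of_le zero_le_one, hν]
  have hQ2 : ∀ t : ℝ, (∫ s in (0:ℝ)..1, k t s * g s) = ∫ s, k t s * g s ∂ν := by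
    intro t; rw [intervalIntegral.integral_of_le zero_le_one, hν]
  -- elements of the inf-set are nonnegative
  have hel : ∀ t ∈ Icc (0:ℝ) 1, 0 ≤ γ t / (1 - ∫ t', γ t' ∂μA) *
      (∫ s in (0:ℝ)..1, (∫ t', k t' s ∂μA) * g s) + ∫ s in (0:ℝ)..1, k t s * g s := by
    intro t ht
    have e1 : 0 ≤ γ t / (1 - ∫ t', γ t' ∂μA) := div_nonneg (hγ0 t ht) h1A.le
    have e2 : 0 ≤ ∫ s in (0:ℝ)..1, (∫ t', k t' s ∂μA) * g s := by
      rw [hQ1]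
      refine integral_nonneg_of_ae ?_
      filter_upwards [hsIcc, hgν] with s h1 h2
      exact mul_nonneg (h𝒦0 s h1) h2
    have e3 : 0 ≤ ∫ s in (0:ℝ)..1, k t s * g s := by
      rw [hQ2]
      refine integral_nonneg_of_ae ?_
      filter_upwards [hsIcc, hgν] with s h1 h2
      exact mul_nonneg (hk_pos t ht s h1).le h2
    exact add_nonneg (mul_nonneg e1 e2) e3
  have hSbdd : BddBelow ((fun t => γ t / (1 - ∫ t', γ t' ∂μA) *
      (∫ s in (0:ℝ)..1, (∫ t', k t' s ∂μA) * g s) +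
      ∫ s in (0:ℝ)..1, k t s * g s) '' Icc (0:ℝ) 1) := by
    refine ⟨0, ?_⟩
    rintro b ⟨t, ht, rfl⟩
    exact hel t ht
  have hM0 : 0 ≤ sInf ((fun t => γ t / (1 - ∫ t', γ t' ∂μA) *
      (∫ s in (0:ℝ)..1, (∫ t', k t' s ∂μA) * g s) +
      ∫ s in (0:ℝ)..1, k t s * g s) '' Icc (0:ℝ) 1) := by
    refine le_csInf (hne.image _) ?_
    rintro b ⟨t, ht, rfl⟩
    exact hel t ht
  have hfbpos : 0 < fb := fbpos_aux fb _ hfbM hM0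
  -- lower bound on f along u
  have hfρ : ∀ᵐ s ∂ν, fb * ρ ≤ f s (u s) := by
    filter_upwards [haeν _ hfb, hsIcc] with s h1 hs
    exact h1 (u s) (hulb s hs) (hnrm s hs)
  -- lower bounds for the integrals
  have hJlb : fb * ρ * (∫ s, (∫ t', k t' s ∂μA) * g s ∂ν)
      ≤ ∫ s, (∫ t', k t' s ∂μA) * G s ∂ν := by
    have h1 : (∫ s, fb * ρ * ((∫ t', k t' s ∂μA) * g s) ∂ν)
        ≤ ∫ s, (∫ t', k t' s ∂μA) * G s ∂ν := by
      refine integral_mono_of_nonneg ?_ hJint ?_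
      · filter_upwards [hsIcc, hgν] with s h1 h2
        exact mul_nonneg (mul_nonneg hfbpos.le hρ.le) (mul_nonneg (h𝒦0 s h1) h2)
      · filter_upwards [hsIcc, hgν, hfρ] with s h1 h2 h3
        have h4 := mul_le_mul_of_nonneg_left h3 (mul_nonneg (h𝒦0 s h1) h2)
        calc fb * ρ * ((∫ t', k t' s ∂μA) * g s)
            = (∫ t', k t' s ∂μA) * g s * (fb * ρ) := by ring
          _ ≤ (∫ t', k t' s ∂μA) * g s * f s (u s) := h4
          _ = (∫ t', k t' s ∂μA) * G s := by simp only [hG]; ring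
    rwa [integral_const_mul] at h1
  have hIlb : ∀ t ∈ Icc (0:ℝ) 1, fb * ρ * (∫ s, k t s * g s ∂ν)
      ≤ ∫ s, k t s * G s ∂ν := by
    intro t ht
    have h1 : (∫ s, fb * ρ * (k t s * g s) ∂ν) ≤ ∫ s, k t s * G s ∂ν := by
      refine integral_mono_of_nonneg ?_ (hkt_int t ht) ?_
      · filter_upwards [hsIcc, hgν] with s h1 h2
        exact mul_nonneg (mul_nonneg hfbpos.le hρ.le)
          (mul_nonneg (hk_pos t ht s h1).le h2)
      · filter_upwards [hsIcc, hgν, hfρ] with s h1 h2 h3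
        have h4 := mul_le_mul_of_nonneg_left h3
          (mul_nonneg (hk_pos t ht s h1).le h2)
        calc fb * ρ * (k t s * g s) = k t s * g s * (fb * ρ) := by ring
          _ ≤ k t s * g s * f s (u s) := h4
          _ = k t s * G s := by simp only [hG]; ring
    rwa [integral_const_mul] at h1
  -- the key pointwise lower bound
  have hkey : ∀ t ∈ Icc (0:ℝ) 1,
      ρ * (fb * sInf ((fun t => γ t / (1 - ∫ t', γ t' ∂μA) *
        (∫ s in (0:ℝ)..1, (∫ t', k t' s ∂μA) * g s) +
        ∫ s in (0:ℝ)..1, k t s * g s) '' Icc (0:ℝ) 1)) ≤ u t := by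
    intro t ht
    have hME : sInf ((fun t => γ t / (1 - ∫ t', γ t' ∂μA) *
        (∫ s in (0:ℝ)..1, (∫ t', k t' s ∂μA) * g s) +
        ∫ s in (0:ℝ)..1, k t s * g s) '' Icc (0:ℝ) 1)
        ≤ γ t / (1 - ∫ t', γ t' ∂μA) *
        (∫ s in (0:ℝ)..1, (∫ t', k t' s ∂μA) * g s) +
        ∫ s in (0:ℝ)..1, k t s * g s :=
      csInf_le hSbdd (mem_image_of_mem _ ht)
    have hJlb' := hJlb
    rw [← hQ1] at hJlb'
    have hIlb' := hIlb t ht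
    rw [← hQ2 t] at hIlb'
    have hd : 0 ≤ γ t / (1 - ∫ t', γ t' ∂μA) := div_nonneg (hγ0 t ht) h1A.le
    have h8 : γ t / (1 - ∫ t', γ t' ∂μA) * (∫ s, (∫ t', k t' s ∂μA) * G s ∂ν)
        ≤ γ t * H u := by
      calc γ t / (1 - ∫ t', γ t' ∂μA) * (∫ s, (∫ t', k t' s ∂μA) * G s ∂ν)
          ≤ γ t / (1 - ∫ t', γ t' ∂μA) * ((1 - ∫ t', γ t' ∂μA) * H u) :=
            mul_le_mul_of_nonneg_left hHuge2 hd
        _ = γ t * H u := by rw [← mul_assoc, div_mul_cancel₀ _ (ne_of_gt h1A)]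
    refine arith_aux ρ fb _ _ _ _ _ _ (γ t * H u) (u t) lam hρ hfbpos hd hME
      hJlb' hIlb' ?_ (heq' t ht) hlam
    exact h8
  -- conclude
  have hfinal : ρ * (fb * sInf ((fun t => γ t / (1 - ∫ t', γ t' ∂μA) *
      (∫ s in (0:ℝ)..1, (∫ t', k t' s ∂μA) * g s) +
      ∫ s in (0:ℝ)..1, k t s * g s) '' Icc (0:ℝ) 1)) ≤ minOnIcc u 0 1 := by
    refine le_csInf (hne.image u) ?_
    rintro b ⟨t, ht, rfl⟩
    exact hkey t ht
  rw [hmin] at hfinal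
  exact contra_aux ρ fb _ hρ hfbM hfinal
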